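/- Let $Z_1, Z_2, Z_3$ be mutually independent standard normal random variables, let $c, c' \in \mathbb{R}$, and $0 < w_a \le w_b < 1$. Then $P(\sqrt{w_b}\, Z_1 + \sqrt{1-w_b}\, Z_2 > c \mid Z_1 \le Z_3 + c') \le P(\sqrt{w_a}\, Z_1 + \sqrt{1-w_a}\, Z_2 > c \mid Z_1 \le Z_3 + c')$. -/

import Mathlib

open MeasureTheory ProbabilityTheory Real Set
open scoped ENNReal NNReal

namespace QAux

lemma rearr {a b u v : ℝ≥0∞} (hab : a ≤ b) (huv : u ≤ v) :
    b * u + a * v ≤ a * u + b * v := by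
  obtain ⟨e, rfl⟩ : ∃ e, b = a + e := ⟨b - a, by rw [add_tsub_cancel_of_le hab]⟩
  rw [add_mul, add_mul]
  calc a * u + e * u + a * v ≤ a * u + e * v + a * v := by gcongr
    _ = a * u + (a * v + e * v) := by ring

lemma gaussPDF_rot {a b : ℝ} (hab : a ^ 2 + b ^ 2 = 1) (p : ℝ × ℝ) :
    gaussianPDF 0 1 (a * p.1 + b * p.2) * gaussianPDF 0 1 (-b * p.1 + a * p.2)
      = gaussianPDF 0 1 p.1 * gaussianPDF 0 1 p.2 := by
  have h : ∀ x y : ℝ, gaussianPDF 0 1 x * gaussianPDF 0 1 y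
      = ENNReal.ofReal ((√(2 * π))⁻¹ ^ 2 * rexp (-(x ^ 2 + y ^ 2) / 2)) := by
    intro x y
    rw [gaussianPDF, gaussianPDF, ← ENNReal.ofReal_mul (gaussianPDFReal_nonneg 0 1 x)]
    congr 1
    simp only [gaussianPDFReal, NNReal.coe_one, mul_one, sub_zero]
    rw [mul_mul_mul_comm, ← Real.exp_add, ← sq]
    congr 1
    ring_nf
  rw [h, h]
  congr 2
  have : (a * p.1 + b * p.2) ^ 2 + (-b * p.1 + a * p.2) ^ 2 = p.1 ^ 2 + p.2 ^ 2 := by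
    linear_combination (p.1 ^ 2 + p.2 ^ 2) * hab
  rw [this]


lemma prod_gauss_eq_withDensity :
    (gaussianReal 0 1).prod (gaussianReal 0 1)
      = ((volume : Measure ℝ).prod volume).withDensity
          (fun p => gaussianPDF 0 1 p.1 * gaussianPDF 0 1 p.2) := by
  refine Measure.prod_eq fun s t hs ht => ?_
  rw [withDensity_apply _ (hs.prod ht), ← Measure.prod_restrict s t,
    lintegral_prod_mul (measurable_gaussianPDF 0 1).aemeasurable
      (measurable_gaussianPDF 0 1).aemeasurable,
    gaussianReal_of_var_ne_zero 0 one_ne_zero,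
    withDensity_apply _ hs, withDensity_apply _ ht]

lemma gauss_rot {a b : ℝ} (ha : 0 < a) (hb : 0 < b) (hab : a ^ 2 + b ^ 2 = 1) (c : ℝ) :
    ((gaussianReal 0 1).prod (gaussianReal 0 1)) {p : ℝ × ℝ | a * p.1 + b * p.2 > c}
      = gaussianReal 0 1 (Ioi c) := by
  classical
  set ρ : ℝ × ℝ → ℝ≥0∞ := fun p => gaussianPDF 0 1 p.1 * gaussianPDF 0 1 p.2 with hρ
  have hρm : Measurable ρ :=
    ((measurable_gaussianPDF 0 1).comp measurable_fst).mul
      ((measurable_gaussianPDF 0 1).comp measurable_snd)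
  set R : (ℝ × ℝ) →ₗ[ℝ] ℝ × ℝ :=
    Matrix.toLin (Module.Basis.finTwoProd ℝ) (Module.Basis.finTwoProd ℝ) !![a, b; -b, a] with hRdef
  have hRapp : ∀ x : ℝ × ℝ, R x = (a * x.1 + b * x.2, -b * x.1 + a * x.2) := by
    intro x
    exact Matrix.toLin_finTwoProd_apply a b (-b) a x
  have hdet : LinearMap.det R = 1 := by
    rw [hRdef, LinearMap.det_toLin, Matrix.det_fin_two_of]
    linarith [hab, sq a, sq b]
  have hRm : Measurable (R : ℝ × ℝ → ℝ × ℝ) := R.continuous_of_finiteDimensional.measurable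
  haveI : Measure.IsAddHaarMeasure ((volume : Measure ℝ).prod volume) :=
    Measure.prod.instIsAddHaarMeasure (volume : Measure ℝ) (volume : Measure ℝ)
  have hvol : Measure.map R ((volume : Measure ℝ).prod volume)
      = (volume : Measure ℝ).prod volume := by
    rw [Measure.map_linearMap_addHaar_eq_smul_addHaar _ (by rw [hdet]; exact one_ne_zero), hdet]
    simp
  have hρR : ∀ x, ρ (R x) = ρ x := by
    intro x
    rw [hRapp]
    exact gaussPDF_rot hab x
  -- invariance of the 2D gaussian under R
  have hmapγ : Measure.map R ((gaussianReal 0 1).prod (gaussianReal 0 1))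
      = (gaussianReal 0 1).prod (gaussianReal 0 1) := by
    rw [prod_gauss_eq_withDensity]
    ext s hs
    rw [Measure.map_apply hRm hs, withDensity_apply _ (hRm hs), withDensity_apply _ hs]
    have h1 : ∫⁻ p in s, ρ p ∂((volume : Measure ℝ).prod volume)
        = ∫⁻ p in s, ρ p ∂(Measure.map R ((volume : Measure ℝ).prod volume)) := by rw [hvol]
    rw [h1, setLIntegral_map hs hρm hRm]
    exact setLIntegral_congr_fun (hRm hs) (fun x _ => (hρR x).symm)
  -- conclude
  have hset : {p : ℝ × ℝ | a * p.1 + b * p.2 > c} = R ⁻¹' (Prod.fst ⁻¹' Ioi c) := by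
    ext x
    simp [hRapp, mem_Ioi]
  rw [hset, ← Measure.map_apply hRm (measurable_fst measurableSet_Ioi), hmapγ,
    ← Measure.map_apply measurable_fst measurableSet_Ioi, Measure.map_fst_prod]
  simp

lemma lint_F_eq {w : ℝ} (hw0 : 0 < w) (hw1 : w < 1) (c : ℝ) :
    ∫⁻ z, gaussianReal 0 1 {y : ℝ | Real.sqrt w * z + Real.sqrt (1 - w) * y > c}
        ∂(gaussianReal 0 1) = gaussianReal 0 1 (Ioi c) := by
  have hms : MeasurableSet {p : ℝ × ℝ | Real.sqrt w * p.1 + Real.sqrt (1 - w) * p.2 > c} :=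
    measurableSet_lt measurable_const (by fun_prop)
  have h := Measure.prod_apply (μ := gaussianReal 0 1) (ν := gaussianReal 0 1) hms
  rw [← gauss_rot (sqrt_pos.mpr hw0) (sqrt_pos.mpr (by linarith : (0:ℝ) < 1 - w))
      (by rw [sq_sqrt hw0.le, sq_sqrt (by linarith : (0:ℝ) ≤ 1 - w)]; ring) c, h]
  rfl

end QAux

open QAux

/-- Comparison form of Lemma 1: for `0 < w_a ≤ w_b < 1`, the conditional crossing
probability with weight `w_b` is at most that with weight `w_a`, conditioning on
`Z₁ ≤ Z₃ + c'`. -/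
theorem Q_comparison {Ω : Type*} [MeasurableSpace Ω]
    (μ : Measure Ω) [IsProbabilityMeasure μ]
    (Z1 Z2 Z3 : Ω → ℝ) (hZm : ∀ i, Measurable (![Z1, Z2, Z3] i))
    (hZ : ∀ i, μ.map (![Z1, Z2, Z3] i) = gaussianReal 0 1)
    (hindep : iIndepFun ![Z1, Z2, Z3] μ)
    (c c' : ℝ) (wa wb : ℝ) (hwa : 0 < wa) (hwab : wa ≤ wb) (hwb : wb < 1) :
    (μ[|{ω | Z1 ω ≤ Z3 ω + c'}])
        {ω | Real.sqrt wb * Z1 ω + Real.sqrt (1 - wb) * Z2 ω > c} ≤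
      (μ[|{ω | Z1 ω ≤ Z3 ω + c'}])
        {ω | Real.sqrt wa * Z1 ω + Real.sqrt (1 - wa) * Z2 ω > c} := by
  rcases eq_or_lt_of_le hwab with rfl | hlt
  · exact le_refl _
  have hwb0 : 0 < wb := lt_trans hwa hlt
  have hwa1 : wa < 1 := lt_trans hlt hwb
  set γ : Measure ℝ := gaussianReal 0 1 with hγdef
  have mZ1 : Measurable Z1 := by simpa using hZm 0
  have mZ2 : Measurable Z2 := by simpa using hZm 1
  have mZ3 : Measurable Z3 := by simpa using hZm 2
  have hZ1 : μ.map Z1 = γ := by simpa using hZ 0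
  have hZ2 : μ.map Z2 = γ := by simpa using hZ 1
  have hZ3 : μ.map Z3 = γ := by simpa using hZ 2
  set A : Set Ω := {ω | Z1 ω ≤ Z3 ω + c'} with hAdef
  have mA : MeasurableSet A := measurableSet_le mZ1 (mZ3.add_const c')
  -- joint law of ((Z1, Z3), Z2)
  have h13 : IndepFun Z1 Z3 μ := by
    simpa using hindep.indepFun (show (0 : Fin 3) ≠ 2 by decide)
  have hm13 : μ.map (fun ω => (Z1 ω, Z3 ω)) = γ.prod γ := by
    have h := (indepFun_iff_map_prod_eq_prod_map_map mZ1.aemeasurable mZ3.aemeasurable).mp h13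
    rw [h, hZ1, hZ3]
  have hpair : IndepFun (fun ω => (Z1 ω, Z3 ω)) Z2 μ := by
    simpa using hindep.indepFun_prodMk hZm 0 2 1 (by decide) (by decide)
  have hjoint : μ.map (fun ω => ((Z1 ω, Z3 ω), Z2 ω)) = (γ.prod γ).prod γ := by
    have h := (indepFun_iff_map_prod_eq_prod_map_map
      (mZ1.prodMk mZ3).aemeasurable mZ2.aemeasurable).mp hpair
    rw [h, hm13, hZ2]
  -- the two basic one-dimensional functions
  set F : ℝ → ℝ → ℝ≥0∞ := fun w z => γ {y : ℝ | Real.sqrt w * z + Real.sqrt (1 - w) * y > c}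
    with hFdef
  set H : ℝ → ℝ≥0∞ := fun z => γ {y : ℝ | z ≤ y + c'} with hHdef
  have hFmono : ∀ w, 0 ≤ w → Monotone (F w) := by
    intro w hw z z' hzz
    refine measure_mono fun y hy => ?_
    simp only [hFdef, mem_setOf_eq] at hy ⊢
    have : Real.sqrt w * z ≤ Real.sqrt w * z' :=
      mul_le_mul_of_nonneg_left hzz (Real.sqrt_nonneg w)
    linarith
  have hFmeas : ∀ w, 0 ≤ w → Measurable (F w) := fun w hw => (hFmono w hw).measurable
  have hHanti : Antitone H := by
    intro z z' hzz
    refine measure_mono fun y hy => ?_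
    simp only [hHdef, mem_setOf_eq] at hy ⊢
    linarith
  have hHmeas : Measurable H := hHanti.measurable
  -- key identity: μ (A ∩ S w) = ∫⁻ z, F w z * H z ∂γ
  have key : ∀ w : ℝ, 0 ≤ w →
      μ (A ∩ {ω | Real.sqrt w * Z1 ω + Real.sqrt (1 - w) * Z2 ω > c})
        = ∫⁻ z, F w z * H z ∂γ := by
    intro w hw
    set T : Set ((ℝ × ℝ) × ℝ) :=
      {p | p.1.1 ≤ p.1.2 + c' ∧ c < Real.sqrt w * p.1.1 + Real.sqrt (1 - w) * p.2} with hTdef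
    have hTm : MeasurableSet T :=
      (measurableSet_le (measurable_fst.comp measurable_fst)
          ((measurable_snd.comp measurable_fst).add_const c')).inter
        (measurableSet_lt measurable_const
          (((measurable_fst.comp measurable_fst).const_mul _).add
            (measurable_snd.const_mul _)))
    have hsetEq : A ∩ {ω | Real.sqrt w * Z1 ω + Real.sqrt (1 - w) * Z2 ω > c}
        = (fun ω => ((Z1 ω, Z3 ω), Z2 ω)) ⁻¹' T := by
      ext ω; simp [hAdef, hTdef]
    have hfm : Measurable (fun ω => ((Z1 ω, Z3 ω), Z2 ω)) := by fun_prop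
    rw [hsetEq, ← Measure.map_apply hfm hTm, hjoint, Measure.prod_apply hTm]
    set B : Set (ℝ × ℝ) := {q | q.1 ≤ q.2 + c'} with hBdef
    have hBm : MeasurableSet B := measurableSet_le measurable_fst (measurable_snd.add_const c')
    have hptw : ∀ q : ℝ × ℝ, γ (Prod.mk q ⁻¹' T)
        = B.indicator (fun q => F w q.1) q := by
      intro q
      by_cases hq : q.1 ≤ q.2 + c'
      · have : Prod.mk q ⁻¹' T = {y : ℝ | Real.sqrt w * q.1 + Real.sqrt (1 - w) * y > c} := by
          ext y; simp [hTdef, hq]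
        rw [this, Set.indicator_of_mem (by exact hq) _]
      · have : Prod.mk q ⁻¹' T = (∅ : Set ℝ) := by
          ext y; simp [hTdef, hq]
        rw [this, Set.indicator_of_notMem (by exact hq) _]
        simp
    rw [lintegral_congr hptw]
    have hindm : Measurable (B.indicator (fun q : ℝ × ℝ => F w q.1)) :=
      ((hFmeas w hw).comp measurable_fst).indicator hBm
    rw [lintegral_prod _ hindm.aemeasurable]
    refine lintegral_congr fun z1 => ?_
    have : ∀ z3 : ℝ, B.indicator (fun q : ℝ × ℝ => F w q.1) (z1, z3)
        = Set.indicator {y : ℝ | z1 ≤ y + c'} (fun _ => F w z1) z3 := by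
      intro z3
      by_cases h : z1 ≤ z3 + c'
      · rw [Set.indicator_of_mem (by exact h), Set.indicator_of_mem (by exact h)]
      · rw [Set.indicator_of_notMem (by exact h), Set.indicator_of_notMem (by exact h)]
    have hsm : MeasurableSet {y : ℝ | z1 ≤ y + c'} :=
      measurableSet_le measurable_const (measurable_id.add_const c')
    rw [lintegral_congr this, lintegral_indicator_const hsm]
  -- equal totals
  have htot : ∀ w : ℝ, 0 < w → w < 1 → ∫⁻ z, F w z ∂γ = γ (Ioi c) := by
    intro w hw0 hw1
    exact lint_F_eq hw0 hw1 c
  -- single-crossing point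
  set P : ℝ := Real.sqrt wb * Real.sqrt (1 - wa) - Real.sqrt wa * Real.sqrt (1 - wb) with hPdef
  set Q : ℝ := Real.sqrt (1 - wa) - Real.sqrt (1 - wb) with hQdef
  have hsa : 0 < Real.sqrt wa := Real.sqrt_pos.mpr hwa
  have hsb : 0 < Real.sqrt wb := Real.sqrt_pos.mpr hwb0
  have hs1a : 0 < Real.sqrt (1 - wa) := Real.sqrt_pos.mpr (by linarith)
  have hs1b : 0 < Real.sqrt (1 - wb) := Real.sqrt_pos.mpr (by linarith)
  have hsab : Real.sqrt wa < Real.sqrt wb := Real.sqrt_lt_sqrt hwa.le hlt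
  have hs1ab : Real.sqrt (1 - wb) < Real.sqrt (1 - wa) :=
    Real.sqrt_lt_sqrt (by linarith) (by linarith)
  have hP : 0 < P := by
    rw [hPdef, sub_pos]
    exact mul_lt_mul'' hsab hs1ab hsa.le hs1b.le
  set zstar : ℝ := c * Q / P with hzdef
  -- Ioi description of the F sets
  have hIoi : ∀ w : ℝ, 0 < w → w < 1 → ∀ z : ℝ,
      {y : ℝ | Real.sqrt w * z + Real.sqrt (1 - w) * y > c}
        = Ioi ((c - Real.sqrt w * z) / Real.sqrt (1 - w)) := by
    intro w hw0 hw1 z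
    have hs : 0 < Real.sqrt (1 - w) := Real.sqrt_pos.mpr (by linarith)
    ext y
    simp only [mem_setOf_eq, mem_Ioi, gt_iff_lt]
    rw [div_lt_iff₀ hs]
    constructor <;> intro <;> nlinarith
  have hFcmp : ∀ z : ℝ, (z ≤ zstar → F wb z ≤ F wa z) ∧ (zstar ≤ z → F wa z ≤ F wb z) := by
    intro z
    have hrw : ∀ (h : z ≤ zstar ∨ zstar ≤ z), True := fun _ => trivial
    constructor
    · intro hz
      have hzp : z * P ≤ c * Q := by
        rw [hzdef] at hz
        calc z * P ≤ c * Q / P * P := by exact mul_le_mul_of_nonneg_right hz hP.le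
          _ = c * Q := by field_simp
      simp only [hFdef]
      rw [hIoi wa hwa hwa1 z, hIoi wb hwb0 hwb z]
      refine measure_mono fun y hy => ?_
      simp only [mem_Ioi] at hy ⊢
      have hle : (c - Real.sqrt wa * z) / Real.sqrt (1 - wa)
          ≤ (c - Real.sqrt wb * z) / Real.sqrt (1 - wb) := by
        rw [div_le_div_iff₀ hs1a hs1b]
        simp only [hPdef, hQdef] at hzp
        nlinarith [hzp]
      linarith
    · intro hz
      have hzp : c * Q ≤ z * P := by
        rw [hzdef] at hz
        calc c * Q = c * Q / P * P := by field_simp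
          _ ≤ z * P := by exact mul_le_mul_of_nonneg_right hz hP.le
      simp only [hFdef]
      rw [hIoi wa hwa hwa1 z, hIoi wb hwb0 hwb z]
      refine measure_mono fun y hy => ?_
      simp only [mem_Ioi] at hy ⊢
      have hle : (c - Real.sqrt wb * z) / Real.sqrt (1 - wb)
          ≤ (c - Real.sqrt wa * z) / Real.sqrt (1 - wa) := by
        rw [div_le_div_iff₀ hs1b hs1a]
        simp only [hPdef, hQdef] at hzp
        nlinarith [hzp]
      linarith
  -- pointwise rearrangement inequality
  set t : ℝ≥0∞ := H zstar with htdef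
  have hptw : ∀ z : ℝ, F wb z * H z + F wa z * t ≤ F wa z * H z + F wb z * t := by
    intro z
    rcases le_total z zstar with hz | hz
    · have h1 : F wb z ≤ F wa z := (hFcmp z).1 hz
      have h2 : t ≤ H z := hHanti hz
      have := rearr h1 h2 (u := t) (v := H z)
      calc F wb z * H z + F wa z * t = F wa z * t + F wb z * H z := by ring
        _ ≤ F wb z * t + F wa z * H z := rearr h1 h2
        _ = F wa z * H z + F wb z * t := by ring
    · have h1 : F wa z ≤ F wb z := (hFcmp z).2 hz
      have h2 : H z ≤ t := hHanti hz
      exact rearr h1 h2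
  -- integrate
  have hintineq : (∫⁻ z, F wb z * H z ∂γ) + (∫⁻ z, F wb z ∂γ) * t
      ≤ (∫⁻ z, F wa z * H z ∂γ) + (∫⁻ z, F wb z ∂γ) * t := by
    have hl : ∫⁻ z, (F wb z * H z + F wa z * t) ∂γ ≤ ∫⁻ z, (F wa z * H z + F wb z * t) ∂γ :=
      lintegral_mono hptw
    rw [lintegral_add_left (f := fun z => F wb z * H z) ((hFmeas wb hwb0.le).mul hHmeas),
      lintegral_add_left (f := fun z => F wa z * H z) ((hFmeas wa hwa.le).mul hHmeas),
      lintegral_mul_const t (hFmeas wa hwa.le),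
      lintegral_mul_const t (hFmeas wb hwb0.le),
      htot wa hwa hwa1, htot wb hwb0 hwb] at hl
    rw [htot wb hwb0 hwb]
    exact hl
  have hfin : (∫⁻ z, F wb z ∂γ) * t ≠ ∞ := by
    have h1 : (∫⁻ z, F wb z ∂γ) * t ≤ 1 * 1 := by
      refine mul_le_mul' ?_ ?_
      · rw [htot wb hwb0 hwb]; exact prob_le_one
      · exact prob_le_one
    exact ne_top_of_le_ne_top (by simp) h1
  have hmain : (∫⁻ z, F wb z * H z ∂γ) ≤ ∫⁻ z, F wa z * H z ∂γ :=
    (ENNReal.add_le_add_iff_right hfin).mp hintineq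
  -- conclude via conditional probability
  rw [cond_apply mA, cond_apply mA]
  refine mul_le_mul_right ?_ _
  rw [key wb hwb0.le, key wa hwa.le]
  exact hmain
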